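/- If A ⊆ B ⊆ P(ω₁), A is the finite-cofinite algebra, and B contains all initial segments of ω₁, then π(B) = Irr_mm(B) = ℵ₁. -/

import Mathlib

open Cardinal Set

universe u
variable {B : Type u} [BooleanAlgebra B]

/-- Membership in the boolean subalgebra of `B` generated by `E`. -/
inductive InGen (E : Set B) : B → Prop
  | base {a : B} : a ∈ E → InGen E a
  | bot : InGen E ⊥
  | compl {a : B} : InGen E a → InGen E aᶜ
  | sup {a b : B} : InGen E a → InGen E b → InGen E (a ⊔ b)

/-- `E` is irredundant. -/
def Irred (E : Set B) : Prop := ∀ a ∈ E, ¬ InGen (E \ {a}) a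

/-- `E` is independent. -/
def Indep (E : Set B) : Prop :=
  ∀ F G : Finset B, ↑F ⊆ E → ↑G ⊆ E → Disjoint F G →
    F.inf id ⊓ G.inf (fun a => aᶜ) ≠ ⊥

/-- `S` is dense in `B`. -/
def DenseSub (S : Set B) : Prop := ∀ b : B, b ≠ ⊥ → ∃ d ∈ S, d ≠ ⊥ ∧ d ≤ b

/-- pi-weight of `B`: least size of a dense subset. -/
noncomputable def piWeight (B : Type u) [BooleanAlgebra B] : Cardinal :=
  sInf {c | ∃ S : Set B, DenseSub S ∧ #S = c}

/-- `E` is a maximal irredundant subset of `B`. -/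
def MaxIrred (E : Set B) : Prop :=
  Irred E ∧ ∀ b : B, b ∉ E → ¬ Irred (insert b E)

/-- least size of a maximal irredundant subset of `B`. -/
noncomputable def irrMM (B : Type u) [BooleanAlgebra B] : Cardinal :=
  sInf {c | ∃ E : Set B, MaxIrred E ∧ #E = c}


/-- A fixed set of size ℵ₁ with its canonical well-order: "ω₁". -/
noncomputable def W : Type := (Cardinal.aleph 1).ord.ToType

noncomputable instance : LinearOrder W := inferInstanceAs (LinearOrder (Cardinal.aleph 1).ord.ToType)

/-- The finite-cofinite algebra on ω₁. -/
def finCofin : Set (Set W) := {b | b.Finite ∨ bᶜ.Finite}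

/-- `S` is (the underlying set of) a subalgebra of `P(ω₁)`. -/
def IsSubalg (S : Set (Set W)) : Prop :=
  ∅ ∈ S ∧ (∀ a ∈ S, aᶜ ∈ S) ∧ ∀ a ∈ S, ∀ b ∈ S, a ∪ b ∈ S

/-- `E` is a maximal irredundant subset of the subalgebra (with carrier) `Bs`. -/
def MaxIrredIn (Bs E : Set (Set W)) : Prop :=
  E ⊆ Bs ∧ Irred E ∧ ∀ b ∈ Bs, b ∉ E → ¬ Irred (insert b E)

/-- `Irr_mm` of a subalgebra of `P(ω₁)` with carrier `Bs`. -/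
noncomputable def irrMMIn (Bs : Set (Set W)) : Cardinal :=
  sInf {c | ∃ E, MaxIrredIn Bs E ∧ #E = c}

/-- pi-weight of a subalgebra of `P(ω₁)` with carrier `Bs`. -/
noncomputable def piIn (Bs : Set (Set W)) : Cardinal :=
  sInf {c | ∃ S, S ⊆ Bs ∧ (∀ b ∈ Bs, b ≠ ∅ → ∃ d ∈ S, d ≠ ∅ ∧ d ⊆ b) ∧ #S = c}

/-- `C` is a closed unbounded subset of ω₁. -/
def IsClubW (C : Set W) : Prop :=
  (∀ α : W, ∃ β ∈ C, α < β) ∧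
    ∀ α : W, (C ∩ Set.Iio α).Nonempty → IsLUB (C ∩ Set.Iio α) α → α ∈ C

/-- `α` and `β` lie in the same `C`-block. -/
def SameBlock (C : Set W) (α β : W) : Prop := ∀ γ ∈ C, (γ ≤ α ↔ γ ≤ β)

/-- `C` is a nice club: all of its blocks are infinite. -/
def NiceClub (C : Set W) : Prop := IsClubW C ∧ ∀ α : W, {β | SameBlock C α β}.Infinite

/-- `b` is a union of `C`-blocks. -/
def BlockUnion (C : Set W) (b : Set W) : Prop :=
  ∀ α β : W, SameBlock C α β → (α ∈ b ↔ β ∈ b)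

/-- `b` is blockish for `C`: both `b` and its complement are unions of ℵ₁ many `C`-blocks. -/
def Blockish (C : Set W) (b : Set W) : Prop :=
  BlockUnion C b ∧ ¬ b.Countable ∧ ¬ bᶜ.Countable

/-- eventual domination: `f α ≤ g α` except on a set of size `< ℵ₁`. -/
def EvDom (f g : W → W) : Prop := {α | ¬ f α ≤ g α}.Countable

/-- the bounding number 𝔟_{ω₁}. -/
noncomputable def bW : Cardinal :=
  sInf {c | ∃ F : Set (W → W), (∀ g, ∃ f ∈ F, ¬ EvDom f g) ∧ #F = c}

/-- the dominating number 𝔡_{ω₁}. -/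
noncomputable def dW : Cardinal :=
  sInf {c | ∃ F : Set (W → W), (∀ g, ∃ f ∈ F, EvDom g f) ∧ #F = c}

/-- `T` splits `X`. -/
def Splits (T X : Set W) : Prop := ¬ (X ∩ T).Countable ∧ ¬ (X \ T).Countable

/-- the reaping number 𝔯_{ω₁}. -/
noncomputable def rW : Cardinal :=
  sInf {c | ∃ R : Set (Set W), (∀ X ∈ R, ¬ X.Countable) ∧
    (∀ T : Set W, ∃ X ∈ R, ¬ Splits T X) ∧ #R = c}

/-- the nice club `C` strongly splits `R`. -/
def StrSplits (C : Set W) (R : Set (Set W)) : Prop :=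
  ∀ b : Set W, Blockish C b → ∀ X ∈ R, Splits b X

/-- the strong reaping number r̂_{ω₁}. -/
noncomputable def rHatW : Cardinal :=
  sInf {c | ∃ R : Set (Set W), (∀ X ∈ R, ¬ X.Countable) ∧
    (∀ C : Set W, NiceClub C → ¬ StrSplits C R) ∧ #R = c}

/-- a subalgebra of `P(ω₁)` is dichotomous iff none of its members is countably infinite. -/
def Dichot (Bs : Set (Set W)) : Prop := ∀ b ∈ Bs, ¬ (b.Countable ∧ b.Infinite)

section AuxLemmas

lemma InGen.mono {E F : Set B} (h : E ⊆ F) {a : B} (ha : InGen E a) : InGen F a := by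
  induction ha with
  | base h' => exact .base (h h')
  | bot => exact .bot
  | compl _ ih => exact .compl ih
  | sup _ _ ih1 ih2 => exact .sup ih1 ih2

lemma InGen.top (E : Set B) : InGen E (⊤ : B) := by
  simpa using (InGen.bot (E := E)).compl

lemma InGen.inf {E : Set B} {a b : B} (ha : InGen E a) (hb : InGen E b) :
    InGen E (a ⊓ b) := by
  simpa using (ha.compl.sup hb.compl).compl

lemma inGen_insert_normal {α : Type*} {E : Set (Set α)} {b a : Set α}
    (h : InGen (insert b E) a) :
    ∃ g₁ g₂ : Set α, InGen E g₁ ∧ InGen E g₂ ∧ a = (g₁ ∩ b) ∪ (g₂ ∩ bᶜ) := by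
  induction h with
  | @base c hc =>
    rcases hc with rfl | hc
    · exact ⟨⊤, ⊥, .top E, .bot, by ext z; simp⟩
    · exact ⟨c, c, .base hc, .base hc, by ext z; by_cases hz : z ∈ b <;> simp [hz]⟩
  | bot => exact ⟨⊥, ⊥, .bot, .bot, by ext z; by_cases hz : z ∈ b <;> simp [hz]⟩
  | @compl c _ ih =>
    obtain ⟨g₁, g₂, h1, h2, rfl⟩ := ih
    exact ⟨g₁ᶜ, g₂ᶜ, h1.compl, h2.compl,
      by ext z; by_cases hz : z ∈ b <;> simp [hz]⟩
  | @sup c d _ _ ih1 ih2 =>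
    obtain ⟨g₁, g₂, h1, h2, rfl⟩ := ih1
    obtain ⟨g₃, g₄, h3, h4, rfl⟩ := ih2
    exact ⟨g₁ ∪ g₃, g₂ ∪ g₄, h1.sup h3, h2.sup h4,
      by ext z; by_cases hz : z ∈ b <;> simp [hz] <;> tauto⟩

/-- finite iteration of the one-step closure of a generating set. -/
def genLayer {α : Type*} (E : Set (Set α)) : ℕ → Set (Set α)
  | 0 => insert ⊥ E
  | n + 1 => genLayer E n ∪ compl '' genLayer E n ∪
      Set.image2 (· ∪ ·) (genLayer E n) (genLayer E n)

lemma genLayer_mono {α : Type*} (E : Set (Set α)) : Monotone (genLayer E) := by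
  apply monotone_nat_of_le_succ
  intro n
  exact (Set.subset_union_left).trans (Set.subset_union_left)

lemma countable_setOf_inGen {α : Type*} {E : Set (Set α)} (hE : E.Countable) :
    {a : Set α | InGen E a}.Countable := by
  have hf : ∀ n, (genLayer E n).Countable := by
    intro n
    induction n with
    | zero => exact hE.insert ⊥
    | succ n ih => exact ((ih.union (ih.image _)).union (ih.image2 ih _))
  have key : ∀ a : Set α, InGen E a → ∃ n, a ∈ genLayer E n := by
    intro a ha
    induction ha with
    | base h' => exact ⟨0, Set.mem_insert_of_mem _ h'⟩
    | bot => exact ⟨0, Set.mem_insert _ _⟩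
    | @compl c _ ih =>
      obtain ⟨n, hn⟩ := ih
      exact ⟨n + 1, Or.inl (Or.inr ⟨c, hn, rfl⟩)⟩
    | @sup c d _ _ ih1 ih2 =>
      obtain ⟨m, hm⟩ := ih1
      obtain ⟨n, hn⟩ := ih2
      refine ⟨max m n + 1, Or.inr ?_⟩
      exact Set.mem_image2_of_mem (genLayer_mono E (le_max_left m n) hm)
        (genLayer_mono E (le_max_right m n) hn)
  exact (Set.countable_iUnion hf).mono (fun a ha => Set.mem_iUnion.2 (key a ha))

lemma mk_W : #W = Cardinal.aleph 1 := Cardinal.mk_ord_toType _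

instance : Infinite W :=
  Cardinal.infinite_iff.2 (by rw [mk_W]; exact Cardinal.aleph0_le_aleph 1)

instance : NoMaxOrder W := Cardinal.noMaxOrder (Cardinal.aleph0_le_aleph 1)

instance : WellFoundedLT W := inferInstanceAs (WellFoundedLT (Cardinal.aleph 1).ord.ToType)

lemma wf_W : WellFounded ((· < ·) : W → W → Prop) := wellFounded_lt

/-- the least element of `W`. -/
noncomputable def wmin : W := wf_W.min Set.univ ⟨Classical.arbitrary W, Set.mem_univ _⟩

lemma wmin_le (α : W) : wmin ≤ α :=
  not_lt.1 (wf_W.not_lt_min _ (Set.mem_univ α))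

/-- the immediate successor in `W`. -/
noncomputable def wsucc (α : W) : W :=
  wf_W.min {x | α < x} (let ⟨y, hy⟩ := exists_gt α; ⟨y, hy⟩)

lemma lt_wsucc (α : W) : α < wsucc α := wf_W.min_mem {x | α < x} _

lemma wsucc_le {α x : W} (h : α < x) : wsucc α ≤ x :=
  not_lt.1 (wf_W.not_lt_min _ h)

/-- the set of nontrivial initial segments of `W`. -/
def E0 : Set (Set W) := {S | ∃ α : W, wmin < α ∧ S = Set.Iio α}

lemma irred_E0 : Irred E0 := by
  rintro a ⟨α, hα, rfl⟩ hgen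
  have key : ∀ X : Set W, InGen (E0 \ {Set.Iio α}) X →
      ∃ β : W, β < α ∧ ∀ x : W, β ≤ x → x < α → (x ∈ X ↔ α ∈ X) := by
    intro X hX
    induction hX with
    | @base c hc =>
      obtain ⟨⟨γ, hγ, rfl⟩, hne⟩ := hc
      have hγα : γ ≠ α := fun h => hne (Set.mem_singleton_iff.2 (by rw [h]))
      rcases lt_or_gt_of_ne hγα with h | h
      · exact ⟨γ, h, fun x hx _ => by simp [Set.mem_Iio, not_lt.2 hx, not_lt.2 h.le]⟩
      · exact ⟨wmin, hα, fun x _ hx => by simp [Set.mem_Iio, hx.trans h, h]⟩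
    | bot => exact ⟨wmin, hα, fun x _ _ => Iff.rfl⟩
    | @compl c _ ih =>
      obtain ⟨β, hβ, hc⟩ := ih
      exact ⟨β, hβ, fun x h1 h2 => by simp [Set.mem_compl_iff, hc x h1 h2]⟩
    | @sup c d _ _ ih1 ih2 =>
      obtain ⟨β₁, hβ₁, h1⟩ := ih1
      obtain ⟨β₂, hβ₂, h2⟩ := ih2
      refine ⟨max β₁ β₂, max_lt hβ₁ hβ₂, fun x hx1 hx2 => ?_⟩
      have e1 := h1 x (le_trans (le_max_left _ _) hx1) hx2
      have e2 := h2 x (le_trans (le_max_right _ _) hx1) hx2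
      simp only [Set.sup_eq_union, Set.mem_union, e1, e2]
  obtain ⟨β, hβ, h⟩ := key _ hgen
  have := h β le_rfl hβ
  simp [Set.mem_Iio, hβ] at this

lemma lowSet {c : Set W} (hc : c.Nonempty) (hm : wmin ∉ c) :
    ∃ α : W, wmin < α ∧ Set.Iio α = cᶜ ∩ Set.Iio (wsucc α) := by
  set α := wf_W.min c hc with hαdef
  have hαc : α ∈ c := wf_W.min_mem c hc
  have hmin : ∀ z : W, z < α → z ∉ c := fun z hz hzc => wf_W.not_lt_min c hzc hz
  have hα : wmin < α := (wmin_le α).lt_of_ne (fun h => hm (h ▸ hαc))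
  refine ⟨α, hα, ?_⟩
  ext z
  simp only [Set.mem_Iio, Set.mem_inter_iff, Set.mem_compl_iff]
  constructor
  · exact fun hz => ⟨hmin z hz, hz.trans (lt_wsucc α)⟩
  · rintro ⟨hzc, hzs⟩
    rcases lt_trichotomy z α with h | rfl | h
    · exact h
    · exact absurd hαc hzc
    · exact absurd hzs (not_lt.2 (wsucc_le h))

lemma kill_E0 (b : Set W) (hb : b ∉ E0) : ¬ Irred (insert b E0) := by
  intro hirr
  by_cases hbe : b = ∅
  · exact hirr b (Set.mem_insert _ _)
      (by rw [hbe, ← Set.bot_eq_empty]; exact .bot)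
  by_cases hbu : b = Set.univ
  · refine hirr b (Set.mem_insert _ _) ?_
    rw [hbu, ← Set.top_eq_univ]
    exact .top _
  have hbne : b.Nonempty := Set.nonempty_iff_ne_empty.2 hbe
  have hbcne : bᶜ.Nonempty := Set.nonempty_compl.2 hbu
  -- choose the side not containing wmin, get the boundary α
  obtain ⟨α, hα, heq, hgen⟩ :
      ∃ α : W, wmin < α ∧ b ≠ Set.Iio α ∧
        InGen ((insert b E0) \ {Set.Iio α}) (Set.Iio α) := by
    have hbE0 : ∀ β : W, wmin < β → b ≠ Set.Iio β := by
      intro β hβ h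
      exact hb ⟨β, hβ, h⟩
    have hmemb : ∀ (α : W), wmin < α → b ∈ (insert b E0) \ {Set.Iio α} := by
      intro α hα
      exact ⟨Set.mem_insert _ _, fun h => hbE0 α hα (Set.mem_singleton_iff.1 h)⟩
    have hmems : ∀ (α : W), wmin < α →
        Set.Iio (wsucc α) ∈ (insert b E0) \ {Set.Iio α} := by
      intro α hα
      refine ⟨Set.mem_insert_of_mem _ ⟨wsucc α, hα.trans (lt_wsucc α), rfl⟩, ?_⟩
      intro h
      have := Set.Iio_injective (Set.mem_singleton_iff.1 h)
      exact absurd this (lt_wsucc α).ne'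
    by_cases hwm : wmin ∈ b
    · obtain ⟨α, hα, heq⟩ := lowSet hbcne (by simp [hwm])
      rw [compl_compl] at heq
      refine ⟨α, hα, hbE0 α hα, ?_⟩
      nth_rewrite 2 [heq]
      exact (InGen.base (hmemb α hα)).inf (InGen.base (hmems α hα))
    · obtain ⟨α, hα, heq⟩ := lowSet hbne hwm
      refine ⟨α, hα, hbE0 α hα, ?_⟩
      nth_rewrite 2 [heq]
      exact (InGen.base (hmemb α hα)).compl.inf (InGen.base (hmems α hα))
  exact hirr (Set.Iio α) (Set.mem_insert_of_mem _ ⟨α, hα, rfl⟩) hgen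

lemma uncountable_of_maxIrredIn {Bs E : Set (Set W)} (hA : finCofin ⊆ Bs)
    (h : MaxIrredIn Bs E) : ¬ E.Countable := by
  intro hc
  obtain ⟨hEBs, hIrr, hmax⟩ := h
  have hSc : {a : Set W | InGen E a}.Countable := countable_setOf_inGen hc
  set S : Set (Set W) := {a : Set W | InGen E a} with hSdef
  set Bad : Set W := ((fun x : W => ({x} : Set W)) ⁻¹' S) ∪
      ⋃ a ∈ E, ({x : W | x ∈ a ∧ a \ {x} ∈ S} ∪ {x : W | x ∉ a ∧ a ∪ {x} ∈ S})
    with hBaddef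
  have hBadc : Bad.Countable := by
    refine (hSc.preimage Set.singleton_injective).union ?_
    refine Set.Countable.biUnion hc fun a _ => Set.Countable.union ?_ ?_
    · refine Set.countable_of_injective_of_countable_image
        (f := fun x => a \ {x}) ?_ (hSc.mono ?_)
      · intro x hx y hy hxy
        have hxy' : a \ {x} = a \ {y} := hxy
        by_contra hne
        have hmem : y ∈ a \ {x} := ⟨hy.1, fun h => hne (Set.mem_singleton_iff.1 h).symm⟩
        rw [hxy'] at hmem
        exact hmem.2 rfl
      · rintro _ ⟨x, hx, rfl⟩
        exact hx.2
    · refine Set.countable_of_injective_of_countable_image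
        (f := fun x => a ∪ {x}) ?_ (hSc.mono ?_)
      · intro x hx y hy hxy
        have hxy' : a ∪ {x} = a ∪ {y} := hxy
        have hmem : x ∈ a ∪ {y} := hxy' ▸ (Set.mem_union_right _ rfl)
        rcases hmem with h | h
        · exact absurd h hx.1
        · exact h
      · rintro _ ⟨x, hx, rfl⟩
        exact hx.2
  obtain ⟨x, hx⟩ : ∃ x : W, x ∉ Bad := by
    by_contra hcon
    push_neg at hcon
    have huniv : (Set.univ : Set W).Countable := hBadc.mono fun z _ => hcon z
    rw [Set.countable_univ_iff] at huniv
    have hle : #W ≤ Cardinal.aleph0 := @Cardinal.mk_le_aleph0 W huniv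
    rw [mk_W] at hle
    exact absurd hle (not_le.2 Cardinal.aleph0_lt_aleph_one)
  have hx1 : ({x} : Set W) ∉ S := fun hmem => hx (Or.inl hmem)
  have hx2 : ∀ a ∈ E, ¬ (x ∈ a ∧ a \ {x} ∈ S) := by
    intro a ha hcontra
    exact hx (Or.inr (Set.mem_biUnion ha (Or.inl hcontra)))
  have hx3 : ∀ a ∈ E, ¬ (x ∉ a ∧ a ∪ {x} ∈ S) := by
    intro a ha hcontra
    exact hx (Or.inr (Set.mem_biUnion ha (Or.inr hcontra)))
  have hxBs : ({x} : Set W) ∈ Bs := hA (Or.inl (Set.finite_singleton x))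
  have hxE : ({x} : Set W) ∉ E := fun hmem => hx1 (InGen.base hmem)
  refine hmax {x} hxBs hxE ?_
  intro a ha hgen
  by_cases hax : a = {x}
  · subst hax
    refine hx1 (hgen.mono ?_)
    rintro z ⟨hz1, hz2⟩
    exact (Set.mem_insert_iff.1 hz1).resolve_left fun h => hz2 (Set.mem_singleton_iff.2 h)
  · have haE : a ∈ E := (Set.mem_insert_iff.1 ha).resolve_left hax
    have hgen' : InGen (insert ({x} : Set W) (E \ {a})) a := by
      refine hgen.mono ?_
      rintro z ⟨hz1, hz2⟩
      rcases Set.mem_insert_iff.1 hz1 with rfl | hz1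
      · exact Set.mem_insert _ _
      · exact Set.mem_insert_of_mem _ ⟨hz1, hz2⟩
    obtain ⟨g₁, g₂, hg₁, hg₂, heq⟩ := inGen_insert_normal hgen'
    have hIa : ¬ InGen (E \ {a}) a := hIrr a haE
    have hg₂S : g₂ ∈ S := hg₂.mono Set.diff_subset
    by_cases hxa : x ∈ a
    · have hax2 : a \ {x} = g₂ \ {x} := by
        ext z
        by_cases hz : z = x
        · simp [hz]
        · simp only [heq, Set.mem_diff, Set.mem_union, Set.mem_inter_iff,
            Set.mem_compl_iff, Set.mem_singleton_iff, hz]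
          tauto
      by_cases hxg : x ∈ g₂
      · have hg2a : g₂ = a := by
          ext z
          by_cases hz : z = x
          · subst hz; simp [hxg, hxa]
          · have := Set.ext_iff.1 hax2 z
            simp only [Set.mem_diff, Set.mem_singleton_iff, hz, not_false_iff,
              and_true] at this
            exact this.symm
        rw [hg2a] at hg₂
        exact hIa hg₂
      · have hg2a : g₂ = a \ {x} := by
          ext z
          by_cases hz : z = x
          · subst hz; simp [hxg]
          · have := Set.ext_iff.1 hax2 z
            simp only [Set.mem_diff, Set.mem_singleton_iff, hz, not_false_iff,
              and_true] at this
            simp only [Set.mem_diff, Set.mem_singleton_iff, hz, not_false_iff, and_true]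
            exact this.symm
        rw [hg2a] at hg₂S
        exact hx2 a haE ⟨hxa, hg₂S⟩
    · have hax2 : a = g₂ \ {x} := by
        ext z
        by_cases hz : z = x
        · subst hz; simp [hxa]
        · simp only [heq, Set.mem_union, Set.mem_inter_iff, Set.mem_compl_iff,
            Set.mem_singleton_iff, Set.mem_diff, hz]
          tauto
      by_cases hxg : x ∈ g₂
      · have hg2a : g₂ = a ∪ {x} := by
          ext z
          by_cases hz : z = x
          · subst hz; simp [hxg]
          · have := Set.ext_iff.1 hax2 z
            simp only [Set.mem_diff, Set.mem_singleton_iff, hz, not_false_iff,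
              and_true] at this
            simp only [Set.mem_union, Set.mem_singleton_iff, hz, or_false]
            exact this.symm
        rw [hg2a] at hg₂S
        exact hx3 a haE ⟨hxa, hg₂S⟩
      · have hg2a : g₂ = a := by
          rw [hax2]
          ext z
          by_cases hz : z = x
          · subst hz; simp [hxg]
          · simp [hz]
        rw [hg2a] at hg₂
        exact hIa hg₂

end AuxLemmas


theorem pi_irrMM_of_initialSegments (Bs : Set (Set W))
    (hsub : IsSubalg Bs) (hA : finCofin ⊆ Bs)
    (hinit : ∀ α : W, Set.Iio α ∈ Bs) :
    piIn Bs = Cardinal.aleph 1 ∧ irrMMIn Bs = Cardinal.aleph 1 := by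
  constructor
  · unfold piIn
    have hmem : Cardinal.aleph 1 ∈
        {c | ∃ S, S ⊆ Bs ∧ (∀ b ∈ Bs, b ≠ ∅ → ∃ d ∈ S, d ≠ ∅ ∧ d ⊆ b) ∧ #S = c} := by
      refine ⟨Set.range (fun α : W => ({α} : Set W)), ?_, ?_, ?_⟩
      · rintro _ ⟨α, rfl⟩
        exact hA (Or.inl (Set.finite_singleton α))
      · intro b _ hbne
        obtain ⟨z, hz⟩ := Set.nonempty_iff_ne_empty.2 hbne
        exact ⟨{z}, Set.mem_range_self z, Set.singleton_ne_empty z,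
          Set.singleton_subset_iff.2 hz⟩
      · rw [Cardinal.mk_range_eq _ Set.singleton_injective, mk_W]
    refine le_antisymm (csInf_le' hmem) (le_csInf ⟨_, hmem⟩ ?_)
    rintro c ⟨S, hSBs, hdense, rfl⟩
    have hsub' : Set.range (fun α : W => ({α} : Set W)) ⊆ S := by
      rintro _ ⟨α, rfl⟩
      obtain ⟨d, hdS, hdne, hdsub⟩ := hdense {α} (hA (Or.inl (Set.finite_singleton α)))
        (Set.singleton_ne_empty α)
      have hd : d = {α} := (Set.subset_singleton_iff_eq.1 hdsub).resolve_left hdne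
      have hmemS : ({α} : Set W) ∈ S := hd ▸ hdS
      exact hmemS
    calc Cardinal.aleph 1 = #W := mk_W.symm
      _ = #(Set.range (fun α : W => ({α} : Set W))) :=
          (Cardinal.mk_range_eq _ Set.singleton_injective).symm
      _ ≤ #S := Cardinal.mk_le_mk_of_subset hsub'
  · unfold irrMMIn
    have hmemE : MaxIrredIn Bs E0 := by
      refine ⟨?_, irred_E0, fun b _ hbE => kill_E0 b hbE⟩
      rintro _ ⟨α, hα, rfl⟩
      exact hinit α
    have hcard : #E0 = Cardinal.aleph 1 := by
      have himg : E0 = Set.Iio '' {α : W | wmin < α} := by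
        ext T
        simp only [E0, Set.mem_setOf_eq, Set.mem_image]
        constructor
        · rintro ⟨α, hα, rfl⟩; exact ⟨α, hα, rfl⟩
        · rintro ⟨α, hα, rfl⟩; exact ⟨α, hα, rfl⟩
      have hset : {α : W | wmin < α} = ({wmin} : Set W)ᶜ := by
        ext α
        simp only [Set.mem_setOf_eq, Set.mem_compl_iff, Set.mem_singleton_iff]
        constructor
        · exact fun h he => absurd h (he ▸ lt_irrefl _)
        · exact fun h => (wmin_le α).lt_of_ne (Ne.symm h)
      have h1 : #({wmin} : Set W) < #W := by
        rw [Cardinal.mk_singleton, mk_W]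
        exact Cardinal.one_lt_aleph0.trans Cardinal.aleph0_lt_aleph_one
      rw [himg, Cardinal.mk_image_eq_of_injOn _ _ Set.Iio_injective.injOn, hset,
        Cardinal.mk_compl_of_infinite _ h1, mk_W]
    have hmem : Cardinal.aleph 1 ∈ {c | ∃ E, MaxIrredIn Bs E ∧ #E = c} :=
      ⟨E0, hmemE, hcard⟩
    refine le_antisymm (csInf_le' hmem) (le_csInf ⟨_, hmem⟩ ?_)
    rintro c ⟨E, hE, rfl⟩
    have hunc := uncountable_of_maxIrredIn hA hE
    rw [Cardinal.countable_iff_lt_aleph_one] at hunc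
    exact not_lt.1 hunc
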